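/- Every countable binary-conflict-free net has a ⊑₀^∞-largest FS-process: there exists a (possibly infinite) firing sequence ρ such that σ ⊑₀^∞ ρ for every firing sequence σ of the net. -/

import Mathlib

open Relation

/-- A place/transition net with place type `S` and transition type `T`. -/
structure Net (S T : Type) where
  /-- arc weight from place `s` to transition `t` -/
  pre : T → S → ℕ
  /-- arc weight from transition `t` to place `s` -/
  post : T → S → ℕ
  /-- the initial marking -/
  M0 : S → ℕ
  pre_finite : ∀ t, {s | pre t s > 0}.Finite
  pre_nonempty : ∀ t, ∃ s, pre t s > 0
  post_finite : ∀ t, {s | post t s > 0}.Finite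

namespace Net

variable {S T : Type} (N : Net S T)

/-- the singleton step `{t}` is enabled at marking `M` -/
def Enabled (t : T) (M : S → ℕ) : Prop := ∀ s, N.pre t s ≤ M s

/-- the two-element multiset step `{t,u}` is enabled at marking `M` -/
def Enabled2 (t u : T) (M : S → ℕ) : Prop := ∀ s, N.pre t s + N.pre u s ≤ M s

/-- firing transition `t` leads from marking `M` to marking `M'` -/
def Fires (t : T) (M M' : S → ℕ) : Prop :=
  N.Enabled t M ∧ M' = fun s => M s - N.pre t s + N.post t s

/-- firing the finite transition sequence `σ` leads from `M` to `M'` -/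
inductive FiresList : (S → ℕ) → List T → (S → ℕ) → Prop
  | nil (M : S → ℕ) : FiresList M [] M
  | cons {M M₁ M' : S → ℕ} {t : T} {σ : List T} :
      N.Fires t M M₁ → FiresList M₁ σ M' → FiresList M (t :: σ) M'

/-- a marking is reachable -/
def Reachable (M : S → ℕ) : Prop := ∃ σ : List T, N.FiresList N.M0 σ M

/-- `σ` is a finite firing sequence of `N` -/
def FS (σ : List T) : Prop := ∃ M, N.FiresList N.M0 σ M

/-- `σ` is a (possibly infinite) firing sequence of `N` -/
def FSInf (σ : Stream'.Seq T) : Prop := ∀ n, N.FS (σ.take n)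

/-- adjacency `≡₀` on finite firing sequences -/
def Adj (σ ρ : List T) : Prop :=
  ∃ (α β : List T) (t u : T) (M : S → ℕ),
    σ = α ++ t :: u :: β ∧ ρ = α ++ u :: t :: β ∧
    N.FiresList N.M0 α M ∧ N.Enabled2 t u M ∧ N.FS σ ∧ N.FS ρ

/-- adjacency `≡₀` on possibly infinite firing sequences -/
def AdjSeq (σ ρ : Stream'.Seq T) : Prop :=
  ∃ (α : List T) (β : Stream'.Seq T) (t u : T) (M : S → ℕ),
    σ = (Stream'.Seq.ofList (α ++ [t, u])).append β ∧
    ρ = (Stream'.Seq.ofList (α ++ [u, t])).append β ∧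
    N.FiresList N.M0 α M ∧ N.Enabled2 t u M ∧ N.FSInf σ ∧ N.FSInf ρ

end Net

/-- the finite sequence `l` is a prefix of the possibly infinite sequence `s` -/
def ListPrefixSeq {T : Type} (l : List T) (s : Stream'.Seq T) : Prop :=
  s.take l.length = l

namespace Net

variable {S T : Type} (N : Net S T)

/-- the preorder `⊑₀^∞` on possibly infinite firing sequences -/
def Sqsubseteq0 (σ ρ : Stream'.Seq T) : Prop :=
  ∀ σ'' : List T, N.FS σ'' → ListPrefixSeq σ'' σ →
    ∃ σ' ρ' : List T, N.FS σ' ∧ N.FS ρ' ∧ σ'' <+: σ' ∧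
      ReflTransGen N.Adj σ' ρ' ∧ ListPrefixSeq ρ' ρ

end Net

/-- `N` is binary-conflict-free: any two distinct transitions individually
enabled at a reachable marking are enabled together as a step. -/
def Net.BinaryConflictFree {S T : Type} (N : Net S T) : Prop :=
  ∀ M, N.Reachable M → ∀ t u : T, t ≠ u →
    N.Enabled t M → N.Enabled u M → N.Enabled2 t u M

/- ######################## auxiliary development ######################## -/

namespace LargestFS

open Net

variable {S T : Type} (N : Net S T)

/-- result of firing `t` at `M` -/
def fire (t : T) (M : S → ℕ) : S → ℕ := fun s => M s - N.pre t s + N.post t s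

lemma fires_fire {t : T} {M : S → ℕ} (h : N.Enabled t M) : N.Fires t M (fire N t M) :=
  ⟨h, rfl⟩

lemma fires_eq {t : T} {M M' : S → ℕ} (h : N.Fires t M M') : M' = fire N t M := h.2

lemma firesList_append {σ τ : List T} : ∀ {M M' : S → ℕ},
    N.FiresList M (σ ++ τ) M' ↔ ∃ M₁, N.FiresList M σ M₁ ∧ N.FiresList M₁ τ M' := by
  induction σ with
  | nil =>
    intro M M'
    constructor
    · intro h; exact ⟨M, .nil M, by simpa using h⟩
    · rintro ⟨M₁, h1, h2⟩; cases h1; simpa using h2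
  | cons t σ ih =>
    intro M M'
    constructor
    · intro h
      cases h with
      | cons hf hrest =>
        obtain ⟨M₁, a, b⟩ := ih.1 hrest
        exact ⟨M₁, .cons hf a, b⟩
    · rintro ⟨M₁, h1, h2⟩
      cases h1 with
      | cons hf hrest => exact .cons hf (ih.2 ⟨M₁, hrest, h2⟩)

lemma firesList_det : ∀ {σ : List T} {M M₁ M₂ : S → ℕ},
    N.FiresList M σ M₁ → N.FiresList M σ M₂ → M₁ = M₂ := by
  intro σ
  induction σ with
  | nil => intro M M₁ M₂ h1 h2; cases h1; cases h2; rfl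
  | cons t σ ih =>
    intro M M₁ M₂ h1 h2
    cases h1 with
    | cons hf1 hr1 =>
      cases h2 with
      | cons hf2 hr2 =>
        rw [hf1.2] at hr1; rw [hf2.2] at hr2
        exact ih hr1 hr2

lemma fs_prefix {σ τ : List T} (h : N.FS σ) (hp : τ <+: σ) : N.FS τ := by
  obtain ⟨rest, rfl⟩ := hp
  obtain ⟨M, hM⟩ := h
  obtain ⟨M₁, h1, _⟩ := (firesList_append N).1 hM
  exact ⟨M₁, h1⟩

lemma enabled2_symm {t u : T} {M : S → ℕ} (h : N.Enabled2 t u M) : N.Enabled2 u t M := by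
  intro s; have := h s; omega

lemma enabled2_left {t u : T} {M : S → ℕ} (h : N.Enabled2 t u M) : N.Enabled t M := by
  intro s; have := h s; omega

lemma enabled2_right {t u : T} {M : S → ℕ} (h : N.Enabled2 t u M) : N.Enabled u M := by
  intro s; have := h s; omega

lemma enabled_fire {t u : T} {M : S → ℕ} (h : N.Enabled2 t u M) :
    N.Enabled t (fire N u M) := by
  intro s; have := h s; simp only [fire]; omega

lemma fire_comm {t u : T} {M : S → ℕ} (h : N.Enabled2 t u M) :
    fire N t (fire N u M) = fire N u (fire N t M) := by
  funext s; have := h s; simp only [fire]; omega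

lemma persist (hN : N.BinaryConflictFree) {M M' : S → ℕ} {t u : T}
    (hreach : N.Reachable M) (ht : N.Enabled t M) (hu : N.Fires u M M') (hne : u ≠ t) :
    N.Enabled t M' := by
  have h2 := hN M hreach t u (Ne.symm hne) ht hu.1
  intro s; have := h2 s; rw [hu.2]; dsimp; omega

lemma reachable_fires {M M' : S → ℕ} {t : T} (h : N.Reachable M) (hf : N.Fires t M M') :
    N.Reachable M' := by
  obtain ⟨σ, hσ⟩ := h
  exact ⟨σ ++ [t], (firesList_append N).2 ⟨M, hσ, .cons hf (.nil _)⟩⟩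

lemma persist_list (hN : N.BinaryConflictFree) {t : T} : ∀ {δ : List T} {M M' : S → ℕ},
    N.Reachable M → N.Enabled t M → N.FiresList M δ M' → t ∉ δ → N.Enabled t M' := by
  intro δ
  induction δ with
  | nil => intro M M' _ ht h _; cases h; exact ht
  | cons u δ ih =>
    intro M M' hr ht h hmem
    cases h with
    | cons hf hrest =>
      have hne : u ≠ t := fun e => hmem (by simp [e])
      exact ih (reachable_fires N hr hf) (persist N hN hr ht hf hne) hrest
        (fun e => hmem (by simp [e]))

lemma swap_marking {α β : List T} {t u : T} {M Mend : S → ℕ}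
    (hα : N.FiresList N.M0 α M) (h2 : N.Enabled2 t u M)
    (h : N.FiresList N.M0 (α ++ t :: u :: β) Mend) :
    N.FiresList N.M0 (α ++ u :: t :: β) Mend := by
  obtain ⟨M₁, h1, h2'⟩ := (firesList_append N).1 h
  rw [show M₁ = M from firesList_det N h1 hα] at h2'
  cases h2' with
  | cons hft hrest =>
    cases hrest with
    | cons hfu hβ =>
      have e1 := hft.2
      subst e1
      have e2 := hfu.2
      subst e2
      have hβ' : N.FiresList (fire N t (fire N u M)) β Mend := by
        rw [fire_comm N h2]; exact hβ
      exact (firesList_append N).2 ⟨M, hα,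
        .cons (fires_fire N (enabled2_right N h2))
          (.cons (fires_fire N (enabled_fire N h2)) hβ')⟩

/-- single swap: FS of the swapped sequence plus the adjacency -/
lemma fs_swap {α β : List T} {t u : T} {M : S → ℕ}
    (hα : N.FiresList N.M0 α M) (h2 : N.Enabled2 t u M)
    (hfs : N.FS (α ++ t :: u :: β)) :
    N.FS (α ++ u :: t :: β) ∧ N.Adj (α ++ t :: u :: β) (α ++ u :: t :: β) := by
  obtain ⟨Mend, hMend⟩ := hfs
  have h2fs := swap_marking N hα h2 hMend
  exact ⟨⟨Mend, h2fs⟩, α, β, t, u, M, rfl, rfl, hα, h2, ⟨Mend, hMend⟩, ⟨Mend, h2fs⟩⟩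

lemma adj_symm : Symmetric N.Adj := by
  rintro σ ρ ⟨α, β, t, u, M, rfl, rfl, hα, h2, hfs1, hfs2⟩
  exact ⟨α, β, u, t, M, rfl, rfl, hα, enabled2_symm N h2, hfs2, hfs1⟩

lemma adj_firesList {σ ρ : List T} (h : N.Adj σ ρ) {M : S → ℕ}
    (hσ : N.FiresList N.M0 σ M) : N.FiresList N.M0 ρ M := by
  obtain ⟨α, β, t, u, Mα, rfl, rfl, hα, h2, _, _⟩ := h
  exact swap_marking N hα h2 hσ

lemma chain_firesList {σ ρ : List T} (h : ReflTransGen N.Adj σ ρ) {M : S → ℕ}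
    (hσ : N.FiresList N.M0 σ M) : N.FiresList N.M0 ρ M := by
  induction h with
  | refl => exact hσ
  | tail _ hadj ih => exact adj_firesList N hadj ih

lemma chain_fs {σ ρ : List T} (h : ReflTransGen N.Adj σ ρ) (hσ : N.FS σ) : N.FS ρ := by
  obtain ⟨M, hM⟩ := hσ; exact ⟨M, chain_firesList N h hM⟩

lemma adj_append {σ ρ κ : List T} (h : N.Adj σ ρ) (hfs : N.FS (σ ++ κ)) :
    N.Adj (σ ++ κ) (ρ ++ κ) := by
  obtain ⟨α, β, t, u, M, rfl, rfl, hα, h2, _, _⟩ := h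
  have hfs1 : N.FS (α ++ t :: u :: (β ++ κ)) := by simpa using hfs
  have hsw := fs_swap N hα h2 hfs1
  exact ⟨α, β ++ κ, t, u, M, by simp, by simp, hα, h2, by simpa using hfs1,
    by simpa using hsw.1⟩

lemma chain_append {σ ρ κ : List T} (h : ReflTransGen N.Adj σ ρ) (hfs : N.FS (σ ++ κ)) :
    ReflTransGen N.Adj (σ ++ κ) (ρ ++ κ) := by
  induction h with
  | refl => exact .refl
  | @tail b c hab hadj ih =>
    refine ih.tail (adj_append N hadj ?_)
    obtain ⟨M, hM⟩ := hfs
    obtain ⟨M₁, h1, h2⟩ := (firesList_append N).1 hM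
    exact ⟨M, (firesList_append N).2 ⟨M₁, chain_firesList N hab h1, h2⟩⟩

/-- move an enabled transition to the front, across `δ₁` not containing it -/
lemma move_front (hN : N.BinaryConflictFree) :
    ∀ (δ₁ π : List T) {Mπ : S → ℕ}, N.FiresList N.M0 π Mπ → ∀ {t : T},
    N.Enabled t Mπ → t ∉ δ₁ → ∀ (δ₂ : List T), N.FS (π ++ δ₁ ++ t :: δ₂) →
    ReflTransGen N.Adj (π ++ δ₁ ++ t :: δ₂) (π ++ t :: (δ₁ ++ δ₂)) := by
  intro δ₁
  induction δ₁ with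
  | nil =>
    intro π Mπ hπ t ht _ δ₂ hfs
    simp only [List.append_nil, List.nil_append]
    exact .refl
  | cons u δ₁ ih =>
    intro π Mπ hπ t ht hmem δ₂ hfs
    have hne : u ≠ t := fun e => hmem (by simp [e])
    have hfs' : N.FS ((π ++ [u]) ++ δ₁ ++ t :: δ₂) := by simpa using hfs
    obtain ⟨Mend, hMend⟩ := hfs'
    obtain ⟨M₁, h1, _⟩ := (firesList_append N).1 hMend
    obtain ⟨Mu, hu1, _⟩ := (firesList_append N).1 h1
    obtain ⟨Mπ', hπ', hu⟩ := (firesList_append N).1 hu1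
    rw [show Mπ' = Mπ from firesList_det N hπ' hπ] at hu
    have hfu : N.Fires u Mπ Mu := by
      cases hu with | cons hf hrest => cases hrest; exact hf
    have hu1' : N.FiresList N.M0 (π ++ [u]) Mu := (firesList_append N).2 ⟨Mπ, hπ, hu⟩
    have htu : N.Enabled t Mu := persist N hN ⟨π, hπ⟩ ht hfu hne
    have hchain1 : ReflTransGen N.Adj ((π ++ [u]) ++ δ₁ ++ t :: δ₂)
        ((π ++ [u]) ++ t :: (δ₁ ++ δ₂)) :=
      ih (π ++ [u]) hu1' htu (fun e => hmem (by simp [e])) δ₂ ⟨Mend, hMend⟩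
    have e2 : (π ++ [u]) ++ t :: (δ₁ ++ δ₂) = π ++ u :: t :: (δ₁ ++ δ₂) := by simp
    rw [e2] at hchain1
    have h2en : N.Enabled2 u t Mπ := hN Mπ ⟨π, hπ⟩ u t hne hfu.1 ht
    have hfsmid : N.FS (π ++ u :: t :: (δ₁ ++ δ₂)) :=
      chain_fs N hchain1 ⟨Mend, by simpa using hMend⟩
    have hswap := fs_swap N hπ h2en hfsmid
    have e1 : π ++ (u :: δ₁) ++ t :: δ₂ = (π ++ [u]) ++ δ₁ ++ t :: δ₂ := by simp
    have e3 : π ++ t :: ((u :: δ₁) ++ δ₂) = π ++ t :: u :: (δ₁ ++ δ₂) := by simp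
    rw [e1, e3]
    exact hchain1.trans (ReflTransGen.single hswap.2)

/-! ### the fair scheduler -/

open Classical in
/-- fair scheduler: at step `n` consider candidate `g (unpair n).1` and fire it if enabled -/
noncomputable def sched (g : ℕ → Option T) : ℕ → List T × (S → ℕ)
  | 0 => ([], N.M0)
  | n + 1 =>
    match g (Nat.unpair n).1 with
    | none => sched g n
    | some t =>
      if N.Enabled t (sched g n).2 then
        ((sched g n).1 ++ [t], fire N t (sched g n).2)
      else sched g n

variable (g : ℕ → Option T)

/-- prefix fired so far -/
noncomputable def rl (n : ℕ) : List T := (sched N g n).1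
/-- current marking -/
noncomputable def mk (n : ℕ) : S → ℕ := (sched N g n).2

lemma sched_step (n : ℕ) :
    (rl N g (n + 1) = rl N g n ∧ mk N g (n + 1) = mk N g n) ∨
    (∃ t, N.Enabled t (mk N g n) ∧ rl N g (n + 1) = rl N g n ++ [t] ∧
      mk N g (n + 1) = fire N t (mk N g n)) := by
  unfold rl mk
  cases hg : g (Nat.unpair n).1 with
  | none => left; simp [sched, hg]
  | some t =>
    by_cases he : N.Enabled t (sched N g n).2
    · right; exact ⟨t, he, by simp [sched, hg, he], by simp [sched, hg, he]⟩
    · left; simp [sched, hg, he]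

lemma sched_fires (n : ℕ) {t : T} (hg : g (Nat.unpair n).1 = some t)
    (ht : N.Enabled t (mk N g n)) : rl N g (n + 1) = rl N g n ++ [t] := by
  unfold rl
  unfold mk at ht
  simp only [sched, hg]
  rw [if_pos ht]

lemma rl_firesList (n : ℕ) : N.FiresList N.M0 (rl N g n) (mk N g n) := by
  induction n with
  | zero => exact .nil _
  | succ n ih =>
    rcases sched_step N g n with ⟨h1, h2⟩ | ⟨t, ht, h1, h2⟩
    · rw [h1, h2]; exact ih
    · rw [h1, h2]
      exact (firesList_append N).2 ⟨_, ih, .cons (fires_fire N ht) (.nil _)⟩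

lemma rl_fs (n : ℕ) : N.FS (rl N g n) := ⟨_, rl_firesList N g n⟩

lemma rl_prefix_succ (n : ℕ) : rl N g n <+: rl N g (n + 1) := by
  rcases sched_step N g n with ⟨h1, _⟩ | ⟨t, _, h1, _⟩
  · rw [h1]
  · rw [h1]; exact ⟨[t], rfl⟩

lemma rl_prefix {n m : ℕ} (h : n ≤ m) : rl N g n <+: rl N g m := by
  induction m with
  | zero => rw [Nat.le_zero.1 h]
  | succ m ih =>
    rcases Nat.lt_or_ge n (m + 1) with h' | h'
    · exact (ih (Nat.lt_succ_iff.1 h')).trans (rl_prefix_succ N g m)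
    · rw [Nat.le_antisymm h h']

/-- steps not firing `t` accumulate a block without `t` -/
lemma rl_block {t : T} : ∀ (j n : ℕ), (∀ i, n ≤ i → i < n + j → rl N g (i + 1) ≠ rl N g i ++ [t]) →
    ∃ η, rl N g (n + j) = rl N g n ++ η ∧ t ∉ η := by
  intro j
  induction j with
  | zero => intro n _; exact ⟨[], by simp, by simp⟩
  | succ j ih =>
    intro n hb
    obtain ⟨η, hη, hmem⟩ := ih n (fun i h1 h2 => hb i h1 (by omega))
    rcases sched_step N g (n + j) with ⟨h1, _⟩ | ⟨u, _, h1, _⟩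
    · exact ⟨η, by rw [show n + (j+1) = n + j + 1 from rfl, h1, hη], hmem⟩
    · have hut : u ≠ t := by
        intro e; subst e
        exact hb (n + j) (by omega) (by omega) h1
      refine ⟨η ++ [u], ?_, ?_⟩
      · rw [show n + (j+1) = n + j + 1 from rfl, h1, hη, List.append_assoc]
      · simp [hmem, Ne.symm hut]

open Classical in
lemma fair (hN : N.BinaryConflictFree) (hg : Function.Surjective g) (n : ℕ) {t : T}
    (ht : N.Enabled t (mk N g n)) :
    ∃ j, rl N g (n + j + 1) = rl N g (n + j) ++ [t] ∧
      ∀ i < j, rl N g (n + i + 1) ≠ rl N g (n + i) ++ [t] := by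
  have hex : ∃ j, rl N g (n + j + 1) = rl N g (n + j) ++ [t] := by
    by_contra hno
    push_neg at hno
    have hen : ∀ j, N.Enabled t (mk N g (n + j)) := by
      intro j
      induction j with
      | zero => exact ht
      | succ j ih =>
        rcases sched_step N g (n + j) with ⟨_, h2⟩ | ⟨u, hu, h1, h2⟩
        · rw [show n + (j+1) = n + j + 1 from rfl, h2]; exact ih
        · have hut : u ≠ t := fun e => hno j (by rw [h1, e])
          rw [show n + (j+1) = n + j + 1 from rfl, h2]
          exact persist N hN ⟨_, rl_firesList N g (n + j)⟩ ih
            ⟨hu, rfl⟩ hut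
    obtain ⟨i, hi⟩ := hg (some t)
    set m := Nat.pair i (n + 1) with hm
    have hnm : n ≤ m := le_trans (by omega) (Nat.right_le_pair i (n + 1))
    have : rl N g (m + 1) = rl N g m ++ [t] := by
      apply sched_fires N g m (by rw [Nat.unpair_pair]; exact hi)
      have := hen (m - n)
      rwa [Nat.add_sub_cancel' hnm] at this
    have := hno (m - n)
    rw [Nat.add_sub_cancel' hnm] at this
    exact this ‹_›
  exact ⟨Nat.find hex, Nat.find_spec hex, fun i hi => Nat.find_min hex hi⟩

/-! ### the limit sequence -/

open Classical in
noncomputable def rho : Stream'.Seq T :=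
  ⟨fun i =>
    if h : ∃ n, i < (rl N g n).length then
      some ((rl N g (Nat.find h))[i]'(Nat.find_spec h))
    else none,
   by
    intro i hi
    refine dif_neg ?_
    rintro ⟨n, hn⟩
    have hex : ∃ m, i < (rl N g m).length := ⟨n, by omega⟩
    have h2 : (if h : ∃ n, i < (rl N g n).length then
        some ((rl N g (Nat.find h))[i]'(Nat.find_spec h)) else none) = none := hi
    rw [dif_pos hex] at h2
    exact Option.some_ne_none _ h2⟩

lemma rl_agree {m n i : ℕ} (him : i < (rl N g m).length) (hin : i < (rl N g n).length) :
    (rl N g m)[i] = (rl N g n)[i] := by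
  rcases le_total m n with h | h
  · exact (rl_prefix N g h).getElem him
  · exact ((rl_prefix N g h).getElem hin).symm

open Classical in
lemma rho_get_pos {i n : ℕ} (h : i < (rl N g n).length) :
    (rho N g).get? i = some ((rl N g n)[i]) := by
  have hex : ∃ m, i < (rl N g m).length := ⟨n, h⟩
  show (if h : ∃ n, i < (rl N g n).length then
      some ((rl N g (Nat.find h))[i]'(Nat.find_spec h)) else none) = _
  rw [dif_pos hex]
  exact congrArg some (rl_agree N g (Nat.find_spec hex) h)

open Classical in
lemma rho_get_none {i : ℕ} (h : ∀ n, (rl N g n).length ≤ i) : (rho N g).get? i = none := by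
  show (if h : ∃ n, i < (rl N g n).length then
      some ((rl N g (Nat.find h))[i]'(Nat.find_spec h)) else none) = none
  rw [dif_neg]
  rintro ⟨n, hn⟩
  exact absurd (h n) (by omega)

lemma rho_take_of_le {k n : ℕ} (hkn : k ≤ (rl N g n).length) :
    (rho N g).take k = (rl N g n).take k := by
  apply List.ext_getElem?
  intro i
  rw [Stream'.Seq.getElem?_take]
  by_cases hik : i < k
  · rw [if_pos hik, rho_get_pos N g (lt_of_lt_of_le hik hkn),
      List.getElem?_take_of_lt hik, List.getElem?_eq_getElem (lt_of_lt_of_le hik hkn)]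
  · rw [if_neg hik]
    symm
    apply List.getElem?_eq_none
    rw [List.length_take]
    omega

lemma rho_take_of_max {k n : ℕ} (hmax : ∀ m, (rl N g m).length ≤ (rl N g n).length) :
    (rho N g).take k = (rl N g n).take k := by
  apply List.ext_getElem?
  intro i
  rw [Stream'.Seq.getElem?_take]
  by_cases hik : i < k
  · rw [if_pos hik, List.getElem?_take_of_lt hik]
    by_cases hin : i < (rl N g n).length
    · rw [rho_get_pos N g hin, List.getElem?_eq_getElem hin]
    · rw [rho_get_none N g (fun m => le_trans (hmax m) (le_of_not_gt hin)),
        List.getElem?_eq_none (le_of_not_gt hin)]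
  · rw [if_neg hik]
    symm
    apply List.getElem?_eq_none
    rw [List.length_take]
    omega

open Classical in
lemma rho_take_exists (k : ℕ) : ∃ n, (rho N g).take k = (rl N g n).take k := by
  by_cases h : ∃ n, k ≤ (rl N g n).length
  · obtain ⟨n, hn⟩ := h
    exact ⟨n, rho_take_of_le N g hn⟩
  · push_neg at h
    set P : ℕ → Prop := fun j => ∃ n, (rl N g n).length = j with hP
    have h0 : P 0 := ⟨0, rfl⟩
    have hPk : P (Nat.findGreatest P k) := Nat.findGreatest_spec (Nat.zero_le k) h0
    obtain ⟨n, hn⟩ := hPk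
    refine ⟨n, rho_take_of_max N g ?_⟩
    intro m
    rw [hn]
    exact Nat.le_findGreatest (le_of_lt (h m)) ⟨m, rfl⟩

lemma rho_prefixSeq (n : ℕ) : ListPrefixSeq (rl N g n) (rho N g) := by
  unfold ListPrefixSeq
  rw [rho_take_of_le N g le_rfl, List.take_length]

lemma rho_fsInf : N.FSInf (rho N g) := by
  intro k
  obtain ⟨n, hn⟩ := rho_take_exists N g k
  rw [hn]
  exact fs_prefix N (rl_fs N g n) (List.take_prefix _ _)

lemma first_occ {t : T} : ∀ {δ : List T}, t ∈ δ → ∃ δ₁ δ₂, δ = δ₁ ++ t :: δ₂ ∧ t ∉ δ₁ := by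
  intro δ
  induction δ with
  | nil => simp
  | cons u δ ih =>
    intro h
    by_cases e : t = u
    · exact ⟨[], δ, by simp [e], by simp⟩
    · obtain ⟨δ₁, δ₂, rfl, h1⟩ := ih ((List.mem_cons.1 h).resolve_left e)
      exact ⟨u :: δ₁, δ₂, rfl, by simp [h1, e]⟩

/-- the main merging lemma -/
lemma mainE (hN : N.BinaryConflictFree) (hg : Function.Surjective g) :
    ∀ (τ π δ : List T) (m : ℕ), N.FS (π ++ τ) →
      ReflTransGen N.Adj (rl N g m) (π ++ δ) →
      ∃ m' δ', ReflTransGen N.Adj (rl N g m') ((π ++ τ) ++ δ') := by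
  intro τ
  induction τ with
  | nil =>
    intro π δ m _ hchain
    exact ⟨m, δ, by simpa using hchain⟩
  | cons t τ' ih =>
    intro π δ m hfs hchain
    have hfsπδ : N.FS (π ++ δ) := chain_fs N hchain (rl_fs N g m)
    obtain ⟨Mall, hMall⟩ := hfs
    obtain ⟨Mπ, hπ, hrest⟩ := (firesList_append N).1 hMall
    have ht : N.Enabled t Mπ := by cases hrest with | cons hf _ => exact hf.1
    have hfs' : N.FS ((π ++ [t]) ++ τ') :=
      ⟨Mall, by rw [show (π ++ [t]) ++ τ' = π ++ t :: τ' by simp]; exact hMall⟩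
    by_cases hmem : t ∈ δ
    · obtain ⟨δ₁, δ₂, rfl, hδ₁⟩ := first_occ hmem
      have hchain2 : ReflTransGen N.Adj (π ++ δ₁ ++ t :: δ₂) (π ++ t :: (δ₁ ++ δ₂)) :=
        move_front N hN δ₁ π hπ ht hδ₁ δ₂ (by simpa using hfsπδ)
      have hchain3 : ReflTransGen N.Adj (rl N g m) ((π ++ [t]) ++ (δ₁ ++ δ₂)) := by
        refine hchain.trans ?_
        rw [show π ++ (δ₁ ++ t :: δ₂) = π ++ δ₁ ++ t :: δ₂ by simp,
          show (π ++ [t]) ++ (δ₁ ++ δ₂) = π ++ t :: (δ₁ ++ δ₂) by simp]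
        exact hchain2
      obtain ⟨m', δ', hc⟩ := ih (π ++ [t]) (δ₁ ++ δ₂) m hfs' hchain3
      exact ⟨m', δ', by rw [show (π ++ t :: τ') ++ δ' = ((π ++ [t]) ++ τ') ++ δ' by simp]; exact hc⟩
    · have hMk : N.FiresList N.M0 (π ++ δ) (mk N g m) :=
        chain_firesList N hchain (rl_firesList N g m)
      obtain ⟨Mπ', hπ', hδfl⟩ := (firesList_append N).1 hMk
      rw [show Mπ' = Mπ from firesList_det N hπ' hπ] at hδfl
      have htMk : N.Enabled t (mk N g m) := persist_list N hN ⟨π, hπ⟩ ht hδfl hmem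
      obtain ⟨j, hfire, hblockmin⟩ := fair N g hN hg m htMk
      obtain ⟨η, hη, hmemη⟩ := rl_block N g j m (fun i h1 h2 => by
        have := hblockmin (i - m) (by omega)
        rwa [show m + (i - m) = i from by omega] at this)
      have hrlj : rl N g (m + j + 1) = rl N g m ++ (η ++ [t]) := by
        rw [hfire, hη, List.append_assoc]
      have hchainA : ReflTransGen N.Adj (rl N g (m + j + 1)) ((π ++ δ) ++ (η ++ [t])) := by
        rw [hrlj]
        exact chain_append N hchain (by rw [← hrlj]; exact rl_fs N g (m + j + 1))
      have hfsend : N.FS (π ++ (δ ++ η) ++ t :: []) := by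
        have := chain_fs N hchainA (rl_fs N g (m + j + 1))
        rw [show π ++ (δ ++ η) ++ t :: [] = (π ++ δ) ++ (η ++ [t]) by simp]
        exact this
      have hmemδη : t ∉ δ ++ η := by simp [hmem, hmemη]
      have hchainB : ReflTransGen N.Adj (π ++ (δ ++ η) ++ t :: []) (π ++ t :: ((δ ++ η) ++ [])) :=
        move_front N hN (δ ++ η) π hπ ht hmemδη [] hfsend
      have hchainC : ReflTransGen N.Adj (rl N g (m + j + 1)) ((π ++ [t]) ++ (δ ++ η)) := by
        refine hchainA.trans ?_
        rw [show (π ++ δ) ++ (η ++ [t]) = π ++ (δ ++ η) ++ t :: [] by simp,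
          show (π ++ [t]) ++ (δ ++ η) = π ++ t :: ((δ ++ η) ++ []) by simp]
        exact hchainB
      obtain ⟨m', δ', hc⟩ := ih (π ++ [t]) (δ ++ η) (m + j + 1) hfs' hchainC
      exact ⟨m', δ', by rw [show (π ++ t :: τ') ++ δ' = ((π ++ [t]) ++ τ') ++ δ' by simp]; exact hc⟩

end LargestFS

theorem largest_fs_process {S T : Type} (N : Net S T)
    (hcount : Countable T) (hN : N.BinaryConflictFree) :
    ∃ ρ : Stream'.Seq T, N.FSInf ρ ∧
      ∀ σ : Stream'.Seq T, N.FSInf σ → N.Sqsubseteq0 σ ρ := by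
  haveI := hcount
  obtain ⟨g, hg⟩ := exists_surjective_nat (Option T)
  refine ⟨LargestFS.rho N g, LargestFS.rho_fsInf N g, ?_⟩
  intro σ _ σ'' hfs _
  obtain ⟨m', δ', hc⟩ := LargestFS.mainE N g hN hg σ'' [] [] 0
    (by simpa using hfs) (by simp [LargestFS.rl, LargestFS.sched]; exact .refl)
  rw [show ([] ++ σ'') ++ δ' = σ'' ++ δ' by simp] at hc
  refine ⟨σ'' ++ δ', LargestFS.rl N g m', LargestFS.chain_fs N hc (LargestFS.rl_fs N g m'),
    LargestFS.rl_fs N g m', List.prefix_append _ _,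
    (@Relation.ReflTransGen.stdSymm _ _ ⟨LargestFS.adj_symm N⟩).symm _ _ hc,
    LargestFS.rho_prefixSeq N g m'⟩
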